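/- arXiv:1602.08828 — 7 statements merged into one kernel-verified Lean document; each statement's English description precedes it below -/
import Mathlib

section
/- Let P and Q be orthogonal projections onto subspaces T and S respectively of a finite-dimensional Hilbert space, with PQP ≥ (1-δ)P for some 0 ≤ δ < 1. Then for every unit vector t ∈ T there exists s ∈ S such that P s = t and ‖s‖ ≤ 1/(1-δ). -/
noncomputable section



/-- The orthogonal projection onto a submodule, as a continuous linear map `E →L[ℂ] E`. -/
def projCLM {E : Type*} [NormedAddCommGroup E] [InnerProductSpace ℂ E] [FiniteDimensional ℂ E]
    (K : Submodule ℂ E) : E →L[ℂ] E :=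
  K.subtypeL.comp K.orthogonalProjectionOnto

theorem exists_preimage_of_viable
    {E : Type*} [NormedAddCommGroup E] [InnerProductSpace ℂ E] [FiniteDimensional ℂ E]
    (T S : Submodule ℂ E) (δ : ℝ) (hδ0 : 0 ≤ δ) (hδ1 : δ < 1)
    (hviable : ((projCLM T).comp ((projCLM S).comp (projCLM T))
        - ((1 - δ : ℝ) : ℂ) • projCLM T).IsPositive) :
    ∀ t ∈ T, ‖t‖ = 1 → ∃ s ∈ S, projCLM T s = t ∧ ‖s‖ ≤ 1 / (1 - δ) := by
  intro t ht hnt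
  set P := projCLM T with hPdef
  set Q := projCLM S with hQdef
  have hδ : (0:ℝ) < 1 - δ := by linarith
  have hP : ∀ x ∈ T, P x = x := by
    intro x hx
    exact (Submodule.starProjection_eq_self_iff (K := T)).mpr hx
  have key : ∀ x, x ∈ T → (1 - δ) * ‖x‖ ^ 2 ≤ RCLike.re (inner ℂ (P (Q x)) x) := by
    intro x hx
    have h2 := hviable.2 x
    rw [ContinuousLinearMap.reApplyInnerSelf_apply] at h2
    simp only [ContinuousLinearMap.sub_apply, ContinuousLinearMap.smul_apply,
      ContinuousLinearMap.comp_apply] at h2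
    rw [hP x hx, inner_sub_left, inner_smul_left, Complex.conj_ofReal, map_sub] at h2
    have h3 : RCLike.re ((((1 - δ : ℝ)) : ℂ) * (inner ℂ x x)) = (1 - δ) * ‖x‖ ^ 2 := by
      simp [RCLike.mul_re, inner_self_eq_norm_sq, inner_self_im]
      left
      norm_cast
    linarith
  let B : T →ₗ[ℂ] T :=
    T.orthogonalProjectionOnto.toLinearMap ∘ₗ (Q.toLinearMap ∘ₗ T.subtype)
  have hB : ∀ x : T, ((B x : E)) = P (Q x) := fun x => rfl
  have hinj : Function.Injective B := by
    rw [← LinearMap.ker_eq_bot, LinearMap.ker_eq_bot']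
    intro x hx
    have h1 := key x x.2
    rw [← hB, hx] at h1
    simp only [Submodule.coe_zero, inner_zero_left, map_zero] at h1
    have : ‖(x:E)‖ ^ 2 ≤ 0 := by nlinarith
    have : ‖(x:E)‖ = 0 := by nlinarith [sq_nonneg ‖(x:E)‖, norm_nonneg (x:E)]
    ext1
    simpa using this
  have hsurj : Function.Surjective B :=
    (LinearMap.injective_iff_surjective).mp hinj
  obtain ⟨u, hu⟩ := hsurj ⟨t, ht⟩
  have hut : P (Q u) = t := by rw [← hB, hu]
  have hun : ‖(u:E)‖ ≤ 1 / (1 - δ) := by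
    have h1 := key u u.2
    rw [hut] at h1
    have h2 : RCLike.re (inner ℂ t (u:E)) ≤ ‖(u:E)‖ := by
      calc RCLike.re (inner ℂ t (u:E)) ≤ ‖(inner ℂ t (u:E))‖ := RCLike.re_le_norm _
        _ ≤ ‖t‖ * ‖(u:E)‖ := norm_inner_le_norm _ _
        _ = ‖(u:E)‖ := by rw [hnt, one_mul]
    rw [le_div_iff₀ hδ]
    nlinarith [norm_nonneg (u:E)]
  refine ⟨Q u, ?_, hut, ?_⟩
  · exact Submodule.coe_mem (S.orthogonalProjectionOnto u)
  · calc ‖Q (u:E)‖ = ‖S.orthogonalProjectionOnto (u:E)‖ := rfl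
      _ ≤ ‖S.orthogonalProjectionOnto‖ * ‖(u:E)‖ := S.orthogonalProjectionOnto.le_opNorm _
      _ ≤ 1 * ‖(u:E)‖ := by
          exact mul_le_mul_of_nonneg_right (Submodule.orthogonalProjectionOnto_norm_le S) (norm_nonneg _)
      _ = ‖(u:E)‖ := one_mul _
      _ ≤ 1 / (1 - δ) := hun
end
end

section
/- Let P and Q be commuting orthogonal projections and R an orthogonal projection such that RPR ≥ (1-δ₁)R and RQR ≥ (1-δ₂)R. Then R(PQ)R ≥ (1-δ₁-δ₂)R. -/
noncomputable section

theorem commuting_projections_product_ineq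
    {E : Type*} [NormedAddCommGroup E] [InnerProductSpace ℂ E] [FiniteDimensional ℂ E]
    (P Q R : E →L[ℂ] E)
    (hP : IsSelfAdjoint P) (hP2 : P.comp P = P)
    (hQ : IsSelfAdjoint Q) (hQ2 : Q.comp Q = Q)
    (hR : IsSelfAdjoint R) (hR2 : R.comp R = R)
    (hPQ : Commute P Q)
    (δ₁ δ₂ : ℝ)
    (h₁ : (R.comp (P.comp R) - ((1 - δ₁ : ℝ) : ℂ) • R).IsPositive)
    (h₂ : (R.comp (Q.comp R) - ((1 - δ₂ : ℝ) : ℂ) • R).IsPositive) :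
    (R.comp ((P.comp Q).comp R) - ((1 - δ₁ - δ₂ : ℝ) : ℂ) • R).IsPositive := by
  set T : E →L[ℂ] E := (1 - P) * (1 - Q) with hT
  have hR2' : R * R = R := hR2
  have hP2' : P * P = P := hP2
  have hQ2' : Q * Q = Q := hQ2
  have hPQ' : P * Q = Q * P := hPQ
  -- T is self-adjoint
  have hTsa : IsSelfAdjoint T := by
    have h1P : IsSelfAdjoint (1 - P) := ((IsSelfAdjoint.one (R := E →L[ℂ] E)).sub hP)
    have h1Q : IsSelfAdjoint (1 - Q) := ((IsSelfAdjoint.one (R := E →L[ℂ] E)).sub hQ)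
    have hc : (1 - P) * (1 - Q) = (1 - Q) * (1 - P) := by
      simp only [mul_sub, sub_mul, mul_one, one_mul, hPQ']; abel
    rw [hT, IsSelfAdjoint, star_mul, h1P, h1Q, ← hc]
  -- T is idempotent
  have hT2 : T * T = T := by
    have hc : Q * (1 - P) = (1 - P) * Q := by simp [mul_sub, sub_mul, hPQ']
    rw [hT]
    calc (1-P)*(1-Q)*((1-P)*(1-Q))
        = (1-P)*((1-Q)*(1-P))*(1-Q) := by noncomm_ring
      _ = (1-P)*((1-P)*(1-Q))*(1-Q) := by
          have hc2 : (1-Q)*(1-P) = (1-P)*(1-Q) := by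
            simp only [mul_sub, sub_mul, mul_one, one_mul, hPQ']; abel
          rw [hc2]
      _ = ((1-P)*(1-P))*((1-Q)*(1-Q)) := by noncomm_ring
      _ = (1-P)*(1-Q) := by
          rw [show (1-P)*(1-P) = 1 - P - P + P*P by noncomm_ring,
              show (1-Q)*(1-Q) = 1 - Q - Q + Q*Q by noncomm_ring, hP2', hQ2']
          noncomm_ring
  -- R T R is positive
  have hpos : (R * T * R).IsPositive := by
    have key : R * T * R = ContinuousLinearMap.adjoint (T * R) ∘L
        (1 : E →L[ℂ] E) ∘L (T * R) := by
      have hadj : ContinuousLinearMap.adjoint (T * R) = R * T := by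
        rw [show T * R = T ∘L R from rfl, ContinuousLinearMap.adjoint_comp]
        rw [hR.adjoint_eq, hTsa.adjoint_eq]; rfl
      rw [hadj]
      calc R * T * R = R * (T * T) * R := by rw [hT2]
        _ = _ := by noncomm_ring [ContinuousLinearMap.comp_def]
    rw [key]
    exact ContinuousLinearMap.isPositive_one.adjoint_conj (T * R)
  -- algebraic identity
  have hTid : R * T * R = R * (P*Q) * R - R * P * R - R * Q * R + R := by
    have : T = 1 - P - Q + P*Q := by rw [hT]; noncomm_ring
    rw [this]
    simp only [mul_add, add_mul, mul_sub, sub_mul, mul_one, one_mul, hR2']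
    noncomm_ring
  have key : R.comp ((P.comp Q).comp R) - ((1 - δ₁ - δ₂ : ℝ) : ℂ) • R =
      (R * T * R) + ((R.comp (P.comp R) - ((1 - δ₁ : ℝ) : ℂ) • R)
        + (R.comp (Q.comp R) - ((1 - δ₂ : ℝ) : ℂ) • R)) := by
    rw [hTid]
    simp only [ContinuousLinearMap.comp_def, ← ContinuousLinearMap.mul_def]
    have hsc : ((1 - δ₁ - δ₂ : ℝ) : ℂ) • R =
        ((1 - δ₁ : ℝ) : ℂ) • R + ((1 - δ₂ : ℝ) : ℂ) • R - R := by
      push_cast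
      module
    rw [hsc]
    have h1 : R * (P * Q * R) = R * (P*Q) * R := by noncomm_ring
    have h2 : R * (P * R) = R * P * R := by noncomm_ring
    have h3 : R * (Q * R) = R * Q * R := by noncomm_ring
    rw [h1, h2, h3]
    abel
  rw [key]
  exact hpos.add (h₁.add h₂)
end
end

section
/- Let T_k denote the k-th Chebyshev polynomial of the first kind. For every real x with |x| ≥ 1 and every positive integer k, |T_k(x)| ≥ ½ exp(2k √((|x|-1)/(|x|+1))). -/
noncomputable section

open Polynomial Real

/-- Evaluation of Chebyshev T at cosh. -/
lemma T_real_cosh_aux (n : ℤ) (t : ℝ) :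
    (Polynomial.Chebyshev.T ℝ n).eval (Real.cosh t) = Real.cosh (n * t) := by
  apply Complex.ofReal_injective
  rw [Polynomial.Chebyshev.complex_ofReal_eval_T, Complex.ofReal_cosh, ← Complex.cos_mul_I,
    Polynomial.Chebyshev.T_complex_cos, Complex.ofReal_cosh, ← Complex.cos_mul_I]
  push_cast
  ring_nf

/-- Parity of Chebyshev T. -/
lemma T_eval_neg_aux (n : ℕ) (x : ℝ) :
    (Polynomial.Chebyshev.T ℝ (n : ℤ)).eval (-x) =
      (-1) ^ n * (Polynomial.Chebyshev.T ℝ (n : ℤ)).eval x := by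
  induction n using Nat.twoStepInduction with
  | zero => simp
  | one => simp
  | more n ih1 ih2 =>
    have h : ((n : ℤ) + 2) = ((n + 2 : ℕ) : ℤ) := by push_cast; ring
    rw [← h, Polynomial.Chebyshev.T_add_two]
    push_cast at ih1 ih2 ⊢
    simp only [Polynomial.eval_sub, Polynomial.eval_mul, Polynomial.eval_ofNat, Polynomial.eval_X]
    rw [ih1, ih2]
    ring

lemma log_ineq_aux (s : ℝ) (h0 : 0 ≤ s) (h1 : s < 1) :
    2 * s ≤ Real.log (1 + s) - Real.log (1 - s) := by
  set f : ℝ → ℝ := fun y => Real.log (1 + y) - Real.log (1 - y) - 2 * y with hf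
  have hmono : MonotoneOn f (Set.Icc (0 : ℝ) s) := by
    apply monotoneOn_of_hasDerivWithinAt_nonneg (convex_Icc 0 s)
      (f' := fun y => 1 / (1 + y) + 1 / (1 - y) - 2)
    · intro y hy
      have hy1 : (1 : ℝ) + y ≠ 0 := by
        have := hy.1; nlinarith
      have hy2 : (1 : ℝ) - y ≠ 0 := by
        have := hy.2; nlinarith
      apply ContinuousWithinAt.sub
      apply ContinuousWithinAt.sub
      · exact ((Real.continuousAt_log hy1).comp (by fun_prop)).continuousWithinAt
      · exact ((Real.continuousAt_log hy2).comp (by fun_prop)).continuousWithinAt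
      · exact (continuous_const.mul continuous_id).continuousWithinAt
    · intro y hy
      rw [interior_Icc] at hy
      have hy1 : (1 : ℝ) + y ≠ 0 := by have := hy.1; nlinarith
      have hy2 : (1 : ℝ) - y ≠ 0 := by have h := hy.2; nlinarith
      have d1 : HasDerivAt (fun y : ℝ => Real.log (1 + y)) (1 / (1 + y)) y := by
        have := (Real.hasDerivAt_log hy1).comp y
          ((hasDerivAt_id y).const_add 1)
        simpa [Function.comp_def] using this
      have d2 : HasDerivAt (fun y : ℝ => Real.log (1 - y)) (-(1 / (1 - y))) y := by
        have := (Real.hasDerivAt_log hy2).comp y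
          ((hasDerivAt_id y).neg.const_add 1)
        simpa [div_eq_mul_inv, Function.comp_def] using this
      have d3 : HasDerivAt f (1 / (1 + y) + 1 / (1 - y) - 2) y := by
        have := (d1.sub d2).sub (((hasDerivAt_id y).const_mul (2 : ℝ)))
        simpa [hf, sub_sub, Pi.sub_def, Pi.add_def] using this
      exact d3.hasDerivWithinAt
    · intro y hy
      rw [interior_Icc] at hy
      have hy0 : (0 : ℝ) < 1 + y := by have := hy.1; linarith
      have hy1 : (0 : ℝ) < 1 - y := by have := hy.2; linarith
      rw [sub_nonneg, div_add_div _ _ (ne_of_gt hy0) (ne_of_gt hy1),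
        le_div_iff₀ (by positivity)]
      nlinarith [sq_nonneg y, hy.1, hy.2]
  have key : f 0 ≤ f s := hmono (Set.left_mem_Icc.2 h0) (Set.right_mem_Icc.2 h0) h0
  simp only [hf, add_zero, sub_zero, Real.log_one, mul_zero, sub_self] at key
  linarith

theorem chebyshev_T_abs_ge_of_one_le_abs (k : ℕ) (hk : 1 ≤ k) (x : ℝ) (hx : 1 ≤ |x|) :
    (1 / 2) * Real.exp (2 * k * Real.sqrt ((|x| - 1) / (|x| + 1))) ≤
      |(Polynomial.Chebyshev.T ℝ (k : ℤ)).eval x| := by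
  set a : ℝ := |x| with ha
  -- reduce to evaluating at a
  have habs : |(Polynomial.Chebyshev.T ℝ (k : ℤ)).eval x| =
      |(Polynomial.Chebyshev.T ℝ (k : ℤ)).eval a| := by
    rcases abs_cases x with ⟨h, _⟩ | ⟨h, _⟩
    · rw [ha, h]
    · rw [ha, h, ← neg_neg x, T_eval_neg_aux]
      rw [abs_mul, abs_pow, abs_neg, abs_one, one_pow, one_mul, neg_neg]
  rw [habs]
  have ha1 : (1 : ℝ) ≤ a := hx
  set s : ℝ := Real.sqrt ((a - 1) / (a + 1)) with hs
  have hq0 : 0 ≤ (a - 1) / (a + 1) := by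
    apply div_nonneg <;> linarith
  have hs0 : 0 ≤ s := Real.sqrt_nonneg _
  have hs2 : s ^ 2 = (a - 1) / (a + 1) := Real.sq_sqrt hq0
  have hq1 : (a - 1) / (a + 1) < 1 := by
    rw [div_lt_one (by linarith)]; linarith
  have hs1 : s < 1 := by nlinarith [hs2, hq1]
  have h1s : (0 : ℝ) < 1 - s := by linarith
  have h1s' : (0 : ℝ) < 1 + s := by linarith
  set r : ℝ := (1 + s) / (1 - s) with hr
  have hr0 : 0 < r := div_pos h1s' h1s
  set t : ℝ := Real.log r with ht
  have het : Real.exp t = r := Real.exp_log hr0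
  have hcosh : Real.cosh t = a := by
    rw [Real.cosh_eq, Real.exp_neg, het]
    rw [hr]
    have ha1' : a + 1 ≠ 0 := by linarith
    field_simp
    have : s ^ 2 * (a + 1) = a - 1 := by
      rw [hs2]; field_simp
    nlinarith [this]
  have heval : (Polynomial.Chebyshev.T ℝ (k : ℤ)).eval a = Real.cosh ((k : ℝ) * t) := by
    rw [← hcosh, T_real_cosh_aux]
    push_cast
    ring_nf
  rw [heval]
  have hcosh_pos : 0 < Real.cosh ((k : ℝ) * t) := Real.cosh_pos _
  rw [abs_of_pos hcosh_pos]
  -- cosh y ≥ exp y / 2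
  have hge : Real.exp ((k : ℝ) * t) / 2 ≤ Real.cosh ((k : ℝ) * t) := by
    rw [Real.cosh_eq]
    have := Real.exp_pos (-((k : ℝ) * t))
    linarith
  have hexp : Real.exp (2 * (k : ℝ) * s) ≤ Real.exp ((k : ℝ) * t) := by
    apply Real.exp_le_exp.2
    have h2s : 2 * s ≤ t := by
      rw [ht, hr, Real.log_div (by linarith) (by linarith)]
      exact log_ineq_aux s hs0 hs1
    have hk0 : (0 : ℝ) ≤ (k : ℝ) := Nat.cast_nonneg k
    nlinarith
  calc (1 / 2) * Real.exp (2 * (k : ℝ) * s) ≤ (1 / 2) * Real.exp ((k : ℝ) * t) := by linarith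
    _ = Real.exp ((k : ℝ) * t) / 2 := by ring
    _ ≤ Real.cosh ((k : ℝ) * t) := hge
end
end

section
/- Let t ≥ 1 and t' ≥ 1 be integers, and define f_t(x) = 1 - e^{-x/t} and h_{t',t}(x) = t·(f_t(x) + f_t(x)²/2 + ⋯ + f_t(x)^{t'}/t'). Then for every real x ≥ 0, |h_{t',t}(x) - x| ≤ (t/t')·(x/t)^{t'}. -/
noncomputable section

open Real Finset

/-- `f_t(x) = 1 - e^{-x/t}`. -/
def softF (t : ℝ) (x : ℝ) : ℝ := 1 - Real.exp (-x / t)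

/-- `h_{t',t}(x) = t ⬝ ∑_{j=1}^{t'} f_t(x)^j / j`. -/
def softH (t' : ℕ) (t : ℝ) (x : ℝ) : ℝ :=
  t * ∑ j ∈ Finset.Icc 1 t', softF t x ^ j / j

lemma softF_lt_one (t x : ℝ) : softF t x < 1 := by
  have := Real.exp_pos (-x / t)
  simp only [softF]; linarith

lemma softF_nonneg {t x : ℝ} (ht : 0 < t) (hx : 0 ≤ x) : 0 ≤ softF t x := by
  have : Real.exp (-x / t) ≤ 1 := by
    rw [Real.exp_le_one_iff]
    rw [neg_div]
    have : 0 ≤ x / t := div_nonneg hx ht.le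
    linarith
  simp only [softF]; linarith

lemma softF_le {t x : ℝ} (ht : 0 < t) : softF t x ≤ x / t := by
  have h := Real.add_one_le_exp (-x / t)
  simp only [softF]
  have : -x / t = -(x / t) := by ring
  rw [this] at h ⊢
  linarith

lemma hasDerivAt_softF (t : ℝ) (ht : 0 < t) (x : ℝ) :
    HasDerivAt (softF t) (Real.exp (-x / t) / t) x := by
  have h1 : HasDerivAt (fun x : ℝ => -x / t) (-1 / t) x := by
    simpa using ((hasDerivAt_id x).neg.div_const t)
  have h2 := (Real.hasDerivAt_exp (-x / t)).comp x h1
  have h3 : HasDerivAt (fun x : ℝ => 1 - Real.exp (-x / t))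
      (0 - Real.exp (-x / t) * (-1 / t)) x := (hasDerivAt_const x (1:ℝ)).sub h2
  convert h3 using 1
  · rfl
  · ring

lemma hasDerivAt_softH (t' : ℕ) (ht' : 1 ≤ t') (t : ℝ) (ht : 0 < t) (x : ℝ) :
    HasDerivAt (softH t' t) (1 - softF t x ^ t') x := by
  have hf := hasDerivAt_softF t ht x
  have hsum : HasDerivAt (fun x => ∑ j ∈ Finset.Icc 1 t', softF t x ^ j / (j : ℝ))
      (∑ j ∈ Finset.Icc 1 t', softF t x ^ (j - 1) * (Real.exp (-x / t) / t)) x := by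
    apply HasDerivAt.fun_sum
    intro j hj
    have hj1 : 1 ≤ j := (Finset.mem_Icc.mp hj).1
    have hjne : (j : ℝ) ≠ 0 := by positivity
    have := (hf.pow j).div_const (j : ℝ)
    refine this.congr_deriv ?_
    field_simp
  have htot := hsum.const_mul t
  refine HasDerivAt.congr_deriv htot ?_
  have hxp : Real.exp (-x / t) ≠ 0 := (Real.exp_pos _).ne'
  have hne : softF t x ≠ 1 := (softF_lt_one t x).ne
  have hre : ∑ j ∈ Finset.Icc 1 t', softF t x ^ (j - 1) * (Real.exp (-x / t) / t)
      = (∑ i ∈ Finset.range t', softF t x ^ i) * (Real.exp (-x / t) / t) := by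
    rw [← Finset.sum_mul]
    congr 1
    rw [← Finset.Ico_add_one_right_eq_Icc, Finset.sum_Ico_eq_sum_range]
    simp
  rw [hre, geom_sum_eq hne]
  have h1 : softF t x - 1 = -Real.exp (-x / t) := by simp [softF]
  rw [h1]
  have ht0 : (t:ℝ) ≠ 0 := ht.ne'
  field_simp
  ring

theorem softH_approx (t t' : ℕ) (ht : 1 ≤ t) (ht' : 1 ≤ t') (x : ℝ) (hx : 0 ≤ x) :
    |softH t' t x - x| ≤ (t / t') * (x / t) ^ t' := by
  have ht0 : (0:ℝ) < (t:ℝ) := by exact_mod_cast ht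
  have hF : ∀ s ∈ Set.uIcc (0:ℝ) x,
      HasDerivAt (fun y => y - softH t' (t:ℝ) y) (softF t s ^ t') s := by
    intro s _
    have h := hasDerivAt_softH t' ht' t ht0 s
    exact ((hasDerivAt_id s).sub h).congr_deriv (by ring)
  have hcont : Continuous fun s : ℝ => softF t s ^ t' := by
    unfold softF; fun_prop
  have hint : IntervalIntegrable (fun s : ℝ => softF t s ^ t') MeasureTheory.volume 0 x :=
    hcont.intervalIntegrable 0 x
  have heq := intervalIntegral.integral_eq_sub_of_hasDerivAt hF hint
  have h0 : softH t' (t:ℝ) 0 = 0 := by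
    have hF0 : softF (t:ℝ) 0 = 0 := by simp [softF]
    rw [softH, hF0, Finset.sum_eq_zero, mul_zero]
    intro j hj
    have : j ≠ 0 := by have := (Finset.mem_Icc.mp hj).1; omega
    simp [zero_pow this]
  rw [h0] at heq
  simp only [sub_zero] at heq
  -- heq : ∫ s in 0..x, softF t s ^ t' = x - softH t' t x
  have key : ∀ s ∈ Set.Icc (0:ℝ) x, softF t s ^ t' ≤ (s / t) ^ (t' - 1) := by
    intro s hs
    have hs0 : 0 ≤ s := hs.1
    have hy0 : 0 ≤ softF (t:ℝ) s := softF_nonneg ht0 hs0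
    have hy1 : softF (t:ℝ) s ≤ 1 := (softF_lt_one t s).le
    have hyu : softF (t:ℝ) s ≤ s / t := softF_le ht0
    have hu0 : 0 ≤ s / (t:ℝ) := div_nonneg hs0 ht0.le
    rcases le_or_gt (s / (t:ℝ)) 1 with h | h
    · calc softF (t:ℝ) s ^ t' ≤ (s/t) ^ t' := pow_le_pow_left₀ hy0 hyu t'
        _ ≤ (s/t) ^ (t'-1) := pow_le_pow_of_le_one hu0 h (by omega)
    · calc softF (t:ℝ) s ^ t' ≤ 1 ^ t' := pow_le_pow_left₀ hy0 hy1 t'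
        _ = 1 := one_pow _
        _ ≤ (s/t) ^ (t'-1) := one_le_pow₀ h.le
  have hcont2 : Continuous fun s : ℝ => (s / (t:ℝ)) ^ (t' - 1) := by fun_prop
  have hint2 : IntervalIntegrable (fun s : ℝ => (s / (t:ℝ)) ^ (t' - 1)) MeasureTheory.volume 0 x :=
    hcont2.intervalIntegrable 0 x
  have hmono := intervalIntegral.integral_mono_on hx hint hint2 key
  have hnn : 0 ≤ ∫ s in (0:ℝ)..x, softF t s ^ t' := by
    apply intervalIntegral.integral_nonneg hx
    intro s hs
    exact pow_nonneg (softF_nonneg ht0 hs.1) t'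
  have hrint : (∫ s in (0:ℝ)..x, (s / (t:ℝ)) ^ (t'-1)) = (t / t') * (x / t) ^ t' := by
    have hrw : ∀ s:ℝ, (s/(t:ℝ))^(t'-1) = (1/(t:ℝ)^(t'-1)) * s^(t'-1) := by
      intro s; rw [div_pow]; ring
    simp_rw [hrw]
    rw [intervalIntegral.integral_const_mul, integral_pow]
    have htn : t' - 1 + 1 = t' := by omega
    rw [htn]
    have hc : ((t' - 1 : ℕ) : ℝ) + 1 = (t' : ℝ) := by
      push_cast [Nat.cast_sub ht']; ring
    rw [hc]
    have ht'0 : (t':ℝ) ≠ 0 := by positivity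
    have htpow : ((t:ℝ))^(t'-1) ≠ 0 := by positivity
    field_simp
    rw [zero_pow (by omega), sub_zero, ← pow_succ, htn, div_pow]
    field_simp
  have habs : |softH t' (t:ℝ) x - x| = x - softH t' (t:ℝ) x := by
    rw [abs_sub_comm, abs_of_nonneg (by linarith [heq ▸ hnn])]
  rw [habs, ← heq]
  rw [hrint] at hmono
  exact hmono
end
end

section
/- Let h₁, …, h_m be orthogonal projections on a finite-dimensional Hilbert space, each commuting with all but at most g of the others, and H = ∑ h_i. Fix any ordering and let φ = ∏_i (1 - h_i) ψ for a unit vector ψ. If φ ≠ 0, then ‖φ‖² ≤ 1 / (ε_φ/g² + 1), where ε_φ = ⟨φ, Hφ⟩ / ‖φ‖². -/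
noncomputable section

open scoped InnerProductSpace
open Classical

namespace DLAux

variable {E : Type*} [NormedAddCommGroup E] [InnerProductSpace ℂ E] [CompleteSpace E]

lemma proj_apply_apply {A : E →L[ℂ] E} (hid : A.comp A = A) (x : E) : A (A x) = A x := by
  have := DFunLike.congr_fun hid x
  simpa using this

lemma orth {A : E →L[ℂ] E} (hsa : IsSelfAdjoint A) (hid : A.comp A = A) (x : E) :
    ⟪A x, x - A x⟫_ℂ = 0 := by
  have hs := hsa.isSymmetric
  have h1 : ⟪A x, x - A x⟫_ℂ = ⟪x, A (x - A x)⟫_ℂ := hs x (x - A x)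
  rw [h1, map_sub, proj_apply_apply hid, sub_self, inner_zero_right]

lemma pyth {A : E →L[ℂ] E} (hsa : IsSelfAdjoint A) (hid : A.comp A = A) (x : E) :
    ‖x‖ ^ 2 = ‖A x‖ ^ 2 + ‖x - A x‖ ^ 2 := by
  have h0 := orth hsa hid x
  have := norm_add_sq_eq_norm_sq_add_norm_sq_of_inner_eq_zero (A x) (x - A x) h0
  have hx : A x + (x - A x) = x := by abel
  rw [hx] at this
  ring_nf
  ring_nf at this
  nlinarith [this]

lemma norm_proj_le {A : E →L[ℂ] E} (hsa : IsSelfAdjoint A) (hid : A.comp A = A) (x : E) :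
    ‖A x‖ ≤ ‖x‖ := by
  have := pyth hsa hid x
  nlinarith [norm_nonneg (A x), norm_nonneg x, sq_nonneg (‖x - A x‖)]

lemma norm_compl_le {A : E →L[ℂ] E} (hsa : IsSelfAdjoint A) (hid : A.comp A = A) (x : E) :
    ‖x - A x‖ ≤ ‖x‖ := by
  have := pyth hsa hid x
  nlinarith [norm_nonneg (x - A x), norm_nonneg x, sq_nonneg (‖A x‖)]


lemma inner_proj_re {A : E →L[ℂ] E} (hsa : IsSelfAdjoint A) (hid : A.comp A = A) (x : E) :
    (⟪x, A x⟫_ℂ).re = ‖A x‖ ^ 2 := by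
  have hs := hsa.isSymmetric
  have h1 : ⟪A x, A x⟫_ℂ = ⟪x, A (A x)⟫_ℂ := hs x (A x)
  rw [proj_apply_apply hid] at h1
  rw [← h1]
  exact inner_self_eq_norm_sq (𝕜 := ℂ) (A x)

variable {m : ℕ} (h : Fin m → (E →L[ℂ] E)) (ψ : E)

/-- partial product state -/
def ρ (s : List (Fin m)) : E := ((s.map fun i => (1 : E →L[ℂ] E) - h i).prod) ψ

lemma ρ_nil : ρ h ψ [] = ψ := by simp [ρ]

lemma ρ_cons (a : Fin m) (t : List (Fin m)) :
    ρ h ψ (a :: t) = ρ h ψ t - h a (ρ h ψ t) := by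
  simp [ρ, List.prod_cons, ContinuousLinearMap.mul_apply, ContinuousLinearMap.sub_apply,
    ContinuousLinearMap.one_apply]

/-- accumulated energy loss -/
def losses : List (Fin m) → ℝ
  | [] => 0
  | a :: t => ‖h a (ρ h ψ t)‖ ^ 2 + losses t

/-- claim bound -/
def cb (i : Fin m) : List (Fin m) → List (Fin m) → ℝ
  | [], _ => 0
  | a :: w, t =>
      (if Commute (h i) (h a) then 0 else ‖h a (ρ h ψ (w ++ i :: t))‖) + cb i w t

/-- tail after `a` -/
def tl (a : Fin m) (s : List (Fin m)) : List (Fin m) := (s.dropWhile (· ≠ a)).tail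

lemma tl_cons_self (a : Fin m) (s : List (Fin m)) : tl a (a :: s) = s := by
  simp [tl, List.dropWhile_cons]

lemma tl_cons_ne (a b : Fin m) (s : List (Fin m)) (hne : b ≠ a) : tl a (b :: s) = tl a s := by
  simp [tl, List.dropWhile_cons, hne]

lemma decomp (i : Fin m) : ∀ l : List (Fin m), i ∈ l →
    l = l.takeWhile (· ≠ i) ++ i :: tl i l := by
  intro l
  induction l with
  | nil => intro hmem; simp at hmem
  | cons a r ih =>
    intro hmem
    by_cases hai : a = i
    · subst hai
      simp [tl, List.takeWhile_cons, List.dropWhile_cons]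
    · have hmem' : i ∈ r := by
        rcases List.mem_cons.mp hmem with h1 | h1
        · exact absurd h1.symm hai
        · exact h1
      have htw : (a :: r).takeWhile (fun x => decide (x ≠ i)) = a :: r.takeWhile (fun x => decide (x ≠ i)) := by
        simp [List.takeWhile_cons, hai]
      have htl : tl i (a :: r) = tl i r := tl_cons_ne i a r hai
      rw [htw, htl]
      exact congrArg (a :: ·) (ih hmem')


lemma loss_eq (hproj : ∀ i, IsSelfAdjoint (h i) ∧ (h i).comp (h i) = h i) (s : List (Fin m)) : ‖ρ h ψ s‖ ^ 2 + losses h ψ s = ‖ψ‖ ^ 2 := by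
  induction s with
  | nil => simp [ρ_nil, losses]
  | cons a t ih =>
    rw [ρ_cons, losses]
    have := pyth (hproj a).1 (hproj a).2 (ρ h ψ t)
    linarith

lemma losses_nonneg (s : List (Fin m)) : 0 ≤ losses h ψ s := by
  induction s with
  | nil => simp [losses]
  | cons a t ih => rw [losses]; positivity

lemma claim (hproj : ∀ i, IsSelfAdjoint (h i) ∧ (h i).comp (h i) = h i) (i : Fin m) (t : List (Fin m)) :
    ∀ w : List (Fin m), ‖h i (ρ h ψ (w ++ i :: t))‖ ≤ cb h ψ i w t := by
  intro w
  induction w with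
  | nil =>
    rw [List.nil_append, ρ_cons, cb]
    rw [map_sub, proj_apply_apply (hproj i).2, sub_self, norm_zero]
  | cons a w ih =>
    rw [List.cons_append, ρ_cons, cb]
    set x := ρ h ψ (w ++ i :: t) with hx
    by_cases hc : Commute (h i) (h a)
    · rw [if_pos hc, zero_add]
      have hkey : h i (x - h a x) = h i x - h a (h i x) := by
        rw [map_sub]
        have : h i (h a x) = h a (h i x) := by
          have := DFunLike.congr_fun hc.eq x
          simpa [ContinuousLinearMap.mul_apply] using this
        rw [this]
      rw [hkey]
      exact le_trans (norm_compl_le (hproj a).1 (hproj a).2 (h i x)) ih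
    · rw [if_neg hc]
      have h1 : h i (x - h a x) = h i x - h i (h a x) := map_sub _ _ _
      rw [h1]
      have h2 : ‖h i x - h i (h a x)‖ ≤ ‖h i x‖ + ‖h i (h a x)‖ := norm_sub_le _ _
      have h3 : ‖h i (h a x)‖ ≤ ‖h a x‖ := norm_proj_le (hproj i).1 (hproj i).2 _
      linarith

lemma cb_eq (i : Fin m) (t : List (Fin m)) :
    ∀ w : List (Fin m), w.Nodup →
      cb h ψ i w t =
        ∑ a ∈ w.toFinset.filter (fun a => ¬ Commute (h i) (h a)),
          ‖h a (ρ h ψ (tl a (w ++ i :: t)))‖ := by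
  intro w
  induction w with
  | nil => intro _; simp [cb]
  | cons b w ih =>
    intro hnd
    have hbw : b ∉ w := (List.nodup_cons.mp hnd).1
    have hndw : w.Nodup := (List.nodup_cons.mp hnd).2
    rw [cb, List.toFinset_cons]
    have htl_b : tl b ((b :: w) ++ i :: t) = w ++ i :: t := tl_cons_self b _
    have hcong : ∀ a ∈ w.toFinset.filter (fun a => ¬ Commute (h i) (h a)),
        ‖h a (ρ h ψ (tl a (w ++ i :: t)))‖ = ‖h a (ρ h ψ (tl a ((b :: w) ++ i :: t)))‖ := by
      intro a ha
      have haw : a ∈ w := List.mem_toFinset.mp (Finset.mem_filter.mp ha).1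
      have hab : b ≠ a := fun hba => hbw (hba ▸ haw)
      rw [List.cons_append, tl_cons_ne a b _ hab]
    by_cases hPb : Commute (h i) (h b)
    · rw [if_pos hPb, zero_add, Finset.filter_insert, if_neg (by simpa using hPb)]
      rw [ih hndw]
      exact Finset.sum_congr rfl hcong
    · rw [if_neg hPb, Finset.filter_insert, if_pos (by simpa using hPb)]
      have hbnot : b ∉ w.toFinset.filter (fun a => ¬ Commute (h i) (h a)) := by
        intro hbmem
        exact hbw (List.mem_toFinset.mp (Finset.mem_filter.mp hbmem).1)
      rw [Finset.sum_insert hbnot, htl_b, ih hndw]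
      congr 1
      exact Finset.sum_congr rfl hcong

lemma losses_eq (s : List (Fin m)) (hnd : s.Nodup) :
    losses h ψ s = ∑ a ∈ s.toFinset, ‖h a (ρ h ψ (tl a s))‖ ^ 2 := by
  induction s with
  | nil => simp [losses]
  | cons b w ih =>
    have hbw : b ∉ w := (List.nodup_cons.mp hnd).1
    have hndw : w.Nodup := (List.nodup_cons.mp hnd).2
    rw [losses, List.toFinset_cons, Finset.sum_insert (by simpa using hbw)]
    rw [tl_cons_self, ih hndw]
    congr 1
    apply Finset.sum_congr rfl
    intro a ha
    have haw : a ∈ w := List.mem_toFinset.mp ha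
    have hab : b ≠ a := fun hba => hbw (hba ▸ haw)
    rw [tl_cons_ne a b _ hab]


lemma main (hproj : ∀ i, IsSelfAdjoint (h i) ∧ (h i).comp (h i) = h i)
    (g : ℕ)
    (hcomm : ∀ i, (Finset.univ.filter fun j => j ≠ i ∧ ¬ Commute (h i) (h j)).card ≤ g)
    (l : List (Fin m)) (hl : l.Nodup) (hlmem : ∀ i, i ∈ l) :
    ∑ i, ‖h i (ρ h ψ l)‖ ^ 2 ≤ (g : ℝ) ^ 2 * (‖ψ‖ ^ 2 - ‖ρ h ψ l‖ ^ 2) := by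
  classical
  set F : Fin m → ℝ := fun a => ‖h a (ρ h ψ (tl a l))‖ ^ 2 with hF
  set B : Fin m → Finset (Fin m) :=
    fun i => ((l.takeWhile (· ≠ i)).toFinset.filter (fun a => ¬ Commute (h i) (h a))) with hB
  -- step 1
  have step1 : ∀ i, ‖h i (ρ h ψ l)‖ ≤ ∑ a ∈ B i, ‖h a (ρ h ψ (tl a l))‖ := by
    intro i
    have hdec := decomp i l (hlmem i)
    have hnodw : (l.takeWhile (· ≠ i)).Nodup := hl.sublist (List.takeWhile_sublist _)
    calc ‖h i (ρ h ψ l)‖ = ‖h i (ρ h ψ (l.takeWhile (· ≠ i) ++ i :: tl i l))‖ := by rw [← hdec]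
      _ ≤ cb h ψ i (l.takeWhile (· ≠ i)) (tl i l) := claim h ψ hproj i _ _
      _ = ∑ a ∈ B i, ‖h a (ρ h ψ (tl a (l.takeWhile (· ≠ i) ++ i :: tl i l)))‖ :=
          cb_eq h ψ i _ _ hnodw
      _ = ∑ a ∈ B i, ‖h a (ρ h ψ (tl a l))‖ := by rw [← hdec]
  -- step 2 : cardinality bounds
  have cardB : ∀ i, (B i).card ≤ g := by
    intro i
    refine le_trans (Finset.card_le_card ?_) (hcomm i)
    intro a ha
    rw [hB] at ha
    have h1 := Finset.mem_filter.mp ha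
    have haw : a ∈ l.takeWhile (· ≠ i) := List.mem_toFinset.mp h1.1
    have hai : a ≠ i := by simpa using List.mem_takeWhile_imp haw
    exact Finset.mem_filter.mpr ⟨Finset.mem_univ a, hai, h1.2⟩
  have cardI : ∀ a, (Finset.univ.filter (fun i => a ∈ B i)).card ≤ g := by
    intro a
    refine le_trans (Finset.card_le_card ?_) (hcomm a)
    intro i hi
    have h1 := Finset.mem_filter.mp hi
    have h2 := Finset.mem_filter.mp h1.2
    have hnc : ¬ Commute (h i) (h a) := h2.2
    have hia : i ≠ a := by
      intro hia; subst hia; exact hnc (Commute.refl _)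
    exact Finset.mem_filter.mpr ⟨Finset.mem_univ i, hia, fun hc => hnc hc.symm⟩
  -- step 3 : Cauchy-Schwarz pointwise
  have step3 : ∀ i, ‖h i (ρ h ψ l)‖ ^ 2 ≤ (g : ℝ) * ∑ a ∈ B i, F a := by
    intro i
    have h1 : ‖h i (ρ h ψ l)‖ ^ 2 ≤ (∑ a ∈ B i, ‖h a (ρ h ψ (tl a l))‖) ^ 2 :=
      pow_le_pow_left₀ (norm_nonneg _) (step1 i) 2
    have h2 : (∑ a ∈ B i, ‖h a (ρ h ψ (tl a l))‖) ^ 2 ≤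
        (B i).card * ∑ a ∈ B i, ‖h a (ρ h ψ (tl a l))‖ ^ 2 :=
      sq_sum_le_card_mul_sum_sq
    have h3 : ((B i).card : ℝ) * (∑ a ∈ B i, F a) ≤ (g : ℝ) * ∑ a ∈ B i, F a := by
      apply mul_le_mul_of_nonneg_right
      · exact_mod_cast cardB i
      · apply Finset.sum_nonneg; intro a _; positivity
    calc ‖h i (ρ h ψ l)‖ ^ 2 ≤ (∑ a ∈ B i, ‖h a (ρ h ψ (tl a l))‖) ^ 2 := h1
      _ ≤ ((B i).card : ℝ) * ∑ a ∈ B i, F a := h2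
      _ ≤ (g : ℝ) * ∑ a ∈ B i, F a := h3
  -- step 4 : sum and swap
  have swap : ∑ i, ∑ a ∈ B i, F a ≤ (g : ℝ) * ∑ a, F a := by
    have e1 : ∀ i, ∑ a ∈ B i, F a = ∑ a, if a ∈ B i then F a else 0 := by
      intro i
      rw [Finset.sum_ite_mem]
      congr 1
      simp [Finset.univ_inter]
    calc ∑ i, ∑ a ∈ B i, F a = ∑ i, ∑ a, if a ∈ B i then F a else 0 := by
          exact Finset.sum_congr rfl fun i _ => e1 i
      _ = ∑ a, ∑ i, if a ∈ B i then F a else 0 := Finset.sum_comm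
      _ = ∑ a, ((Finset.univ.filter (fun i => a ∈ B i)).card : ℝ) * F a := by
          refine Finset.sum_congr rfl fun a _ => ?_
          rw [← Finset.sum_filter, Finset.sum_const, nsmul_eq_mul]
      _ ≤ ∑ a, (g : ℝ) * F a := by
          refine Finset.sum_le_sum fun a _ => ?_
          apply mul_le_mul_of_nonneg_right
          · exact_mod_cast cardI a
          · positivity
      _ = (g : ℝ) * ∑ a, F a := by rw [Finset.mul_sum]
  -- step 5 : total energy
  have huniv : l.toFinset = Finset.univ := by
    apply Finset.eq_univ_of_forall
    intro a; exact List.mem_toFinset.mpr (hlmem a)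
  have htot : ∑ a, F a = ‖ψ‖ ^ 2 - ‖ρ h ψ l‖ ^ 2 := by
    have h1 := losses_eq h ψ l hl
    have h2 := loss_eq h ψ hproj l
    rw [huniv] at h1
    rw [← h1]
    linarith
  calc ∑ i, ‖h i (ρ h ψ l)‖ ^ 2 ≤ ∑ i, (g : ℝ) * ∑ a ∈ B i, F a :=
        Finset.sum_le_sum fun i _ => step3 i
    _ = (g : ℝ) * ∑ i, ∑ a ∈ B i, F a := by rw [Finset.mul_sum]
    _ ≤ (g : ℝ) * ((g : ℝ) * ∑ a, F a) := by
        apply mul_le_mul_of_nonneg_left swap (by positivity)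
    _ = (g : ℝ) ^ 2 * (‖ψ‖ ^ 2 - ‖ρ h ψ l‖ ^ 2) := by rw [htot]; ring

end DLAux


/-- **The detectability lemma.** -/
theorem detectability_lemma
    {E : Type*} [NormedAddCommGroup E] [InnerProductSpace ℂ E] [FiniteDimensional ℂ E]
    {m : ℕ} (h : Fin m → (E →L[ℂ] E))
    (hproj : ∀ i, IsSelfAdjoint (h i) ∧ (h i).comp (h i) = h i)
    (g : ℕ)
    (hcomm : ∀ i, (Finset.univ.filter fun j => j ≠ i ∧ ¬ Commute (h i) (h j)).card ≤ g)
    (l : List (Fin m)) (hl : l.Nodup) (hlmem : ∀ i, i ∈ l)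
    (ψ : E) (hψ : ‖ψ‖ = 1)
    (φ : E) (hφdef : φ = ((l.map fun i => (1 : E →L[ℂ] E) - h i).prod) ψ)
    (hφ : φ ≠ 0)
    (εφ : ℝ) (hε : εφ = (⟪φ, (∑ i, h i) φ⟫_ℂ).re / ‖φ‖ ^ 2) :
    ‖φ‖ ^ 2 ≤ 1 / (εφ / (g : ℝ) ^ 2 + 1) := by
  have _inst : CompleteSpace E := FiniteDimensional.complete ℂ E
  have hφρ : φ = DLAux.ρ h ψ l := hφdef
  set S : ℝ := ∑ i, ‖h i φ‖ ^ 2 with hSdef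
  have hS : (⟪φ, (∑ i, h i) φ⟫_ℂ).re = S := by
    have h1 : (∑ i, h i) φ = ∑ i, h i φ := by
      simp [ContinuousLinearMap.sum_apply]
    rw [h1, inner_sum, Complex.re_sum]
    exact Finset.sum_congr rfl fun i _ =>
      DLAux.inner_proj_re (hproj i).1 (hproj i).2 φ
  have hnpos : (0 : ℝ) < ‖φ‖ ^ 2 := by
    have : 0 < ‖φ‖ := norm_pos_iff.mpr hφ
    positivity
  have hS_nonneg : 0 ≤ S := Finset.sum_nonneg fun i _ => by positivity
  have hεS : εφ * ‖φ‖ ^ 2 = S := by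
    rw [hε, hS]
    field_simp
  have hε_nonneg : 0 ≤ εφ := by
    rw [hε, hS]
    positivity
  have hmain : S ≤ (g : ℝ) ^ 2 * (1 - ‖φ‖ ^ 2) := by
    have := DLAux.main h ψ hproj g hcomm l hl hlmem
    rw [← hφρ, hψ, one_pow] at this
    calc S = ∑ i, ‖h i φ‖ ^ 2 := rfl
      _ ≤ (g : ℝ) ^ 2 * (1 - ‖φ‖ ^ 2) := this
  have hle1 : ‖φ‖ ^ 2 ≤ 1 := by
    have h1 := DLAux.loss_eq h ψ hproj l
    have h2 := DLAux.losses_nonneg h ψ l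
    rw [← hφρ, hψ, one_pow] at h1
    linarith
  by_cases hg : g = 0
  · subst hg
    have hg0 : ((0 : ℕ) : ℝ) ^ 2 = 0 := by norm_num
    have hS0 : S = 0 := le_antisymm (by rw [hg0] at hmain; linarith) hS_nonneg
    have hε0 : εφ = 0 := by
      rw [hε, hS, hS0, zero_div]
    rw [hε0, hg0, zero_div, zero_add, div_one]
    exact hle1
  · have hgpos : (0 : ℝ) < (g : ℝ) ^ 2 := by
      have : (0 : ℝ) < (g : ℝ) := by exact_mod_cast Nat.pos_of_ne_zero hg
      positivity
    have hd : (0 : ℝ) < εφ / (g : ℝ) ^ 2 + 1 := by positivity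
    rw [le_div_iff₀ hd]
    have hkey : ‖φ‖ ^ 2 * (εφ / (g : ℝ) ^ 2) ≤ 1 - ‖φ‖ ^ 2 := by
      have h1 : ‖φ‖ ^ 2 * (εφ / (g : ℝ) ^ 2) = S / (g : ℝ) ^ 2 := by
        rw [← hεS]; ring
      rw [h1, div_le_iff₀ hgpos]
      calc S ≤ (g : ℝ) ^ 2 * (1 - ‖φ‖ ^ 2) := hmain
        _ = (1 - ‖φ‖ ^ 2) * (g : ℝ) ^ 2 := by ring
    nlinarith
end
end

section
/- Let H = ∑_{i=1}^{n-1} h_i be a sum of orthogonal projections such that h_i and h_j commute whenever |i - j| ≥ 2, and define DL(H) = (∏_i (1 - h_{2i})) · (∏_i (1 - h_{2i+1})). Then for any eigenvector ψ of H (with eigenvalue ε'), ‖DL(H) ψ‖² ≥ 1 - 4ε', where ε' = ⟨ψ, Hψ⟩. -/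
noncomputable section

open scoped InnerProductSpace
open Classical

namespace DLConverseAux

variable {E : Type*} [NormedAddCommGroup E] [InnerProductSpace ℂ E] [FiniteDimensional ℂ E]

def IsProj (T : E →L[ℂ] E) : Prop := IsSelfAdjoint T ∧ T * T = T

lemma inner_self_proj {T : E →L[ℂ] E} (hT : IsProj T) (x : E) :
    (⟪x, T x⟫_ℂ).re = ‖T x‖ ^ 2 := by
  have hsymm := (ContinuousLinearMap.isSelfAdjoint_iff_isSymmetric.mp hT.1)
  have h1 : T (T x) = T x := by
    have := congrArg (fun S : E →L[ℂ] E => S x) hT.2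
    simpa [ContinuousLinearMap.mul_apply] using this
  have h2 : ⟪x, T x⟫_ℂ = ⟪T x, T x⟫_ℂ := by
    have h3 := hsymm x (T x)
    simp only [ContinuousLinearMap.coe_coe] at h3
    rw [h3, h1]
  rw [h2]
  have h4 := inner_self_eq_norm_sq (𝕜 := ℂ) (T x)
  simpa [RCLike.re_to_complex] using h4

lemma pythag_proj {T : E →L[ℂ] E} (hT : IsProj T) (x : E) :
    ‖x - T x‖ ^ 2 = ‖x‖ ^ 2 - ‖T x‖ ^ 2 := by
  have hns := norm_sub_sq (𝕜 := ℂ) x (T x)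
  rw [RCLike.re_to_complex, inner_self_proj hT] at hns
  linarith

lemma contraction_proj {T : E →L[ℂ] E} (hT : IsProj T) (x : E) : ‖T x‖ ≤ ‖x‖ := by
  have h := pythag_proj hT x
  nlinarith [norm_nonneg (T x), norm_nonneg x, sq_nonneg ‖x - T x‖]

lemma isProj_one_sub {T : E →L[ℂ] E} (hT : IsProj T) : IsProj (1 - T) := by
  constructor
  · exact (IsSelfAdjoint.one (E →L[ℂ] E)).sub hT.1
  · have h : (1 - T) * (1 - T) = 1 - T - T + T * T := by noncomm_ring
    rw [h, hT.2]; abel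

lemma prod_contraction (L : List (E →L[ℂ] E)) (hL : ∀ T ∈ L, ∀ y : E, ‖T y‖ ≤ ‖y‖) (x : E) :
    ‖L.prod x‖ ≤ ‖x‖ := by
  induction L with
  | nil => simp
  | cons a L ih =>
    rw [List.prod_cons, ContinuousLinearMap.mul_apply]
    exact le_trans (hL a (by simp) _) (ih (fun T hT y => hL T (by simp [hT]) y))

lemma isProj_prod (L : List (E →L[ℂ] E)) (hmem : ∀ T ∈ L, IsProj T)
    (hp : L.Pairwise Commute) : IsProj L.prod := by
  induction L with
  | nil =>
    exact ⟨by simpa using (IsSelfAdjoint.one (E →L[ℂ] E)), by simp⟩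
  | cons a L ih =>
    rw [List.pairwise_cons] at hp
    have hP := ih (fun T hT => hmem T (by simp [hT])) hp.2
    have hc : Commute a L.prod := Commute.list_prod_right _ _ (fun b hb => hp.1 b hb)
    have ha := hmem a (by simp)
    rw [List.prod_cons]
    constructor
    · calc star (a * L.prod) = star L.prod * star a := star_mul _ _
        _ = L.prod * a := by rw [hP.1, ha.1]
        _ = a * L.prod := hc.symm.eq
    · calc (a * L.prod) * (a * L.prod) = a * (L.prod * a) * L.prod := by
            rw [mul_assoc, mul_assoc, mul_assoc]
        _ = a * (a * L.prod) * L.prod := by rw [hc.symm.eq]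
        _ = (a * a) * (L.prod * L.prod) := by rw [mul_assoc, mul_assoc, mul_assoc]
        _ = a * L.prod := by rw [ha.2, hP.2]

lemma lemB (L : List (E →L[ℂ] E)) (hmem : ∀ T ∈ L, IsProj T) (hp : L.Pairwise Commute)
    (x : E) :
    ‖x‖ ^ 2 ≤ ‖(L.map fun T => (1 : E →L[ℂ] E) - T).prod x‖ ^ 2 + (L.map fun T => ‖T x‖ ^ 2).sum := by
  induction L with
  | nil => simp
  | cons a L ih =>
    rw [List.pairwise_cons] at hp
    have ha := hmem a (by simp)
    have hmem' : ∀ T ∈ L, IsProj T := fun T hT => hmem T (by simp [hT])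
    have ih' := ih hmem' hp.2
    set P := (L.map fun T => (1 : E →L[ℂ] E) - T).prod with hPdef
    have hcontr : ∀ y : E, ‖P y‖ ≤ ‖y‖ := by
      intro y
      refine prod_contraction _ ?_ y
      intro S hS z
      rw [List.mem_map] at hS
      obtain ⟨T, hT, rfl⟩ := hS
      exact contraction_proj (isProj_one_sub (hmem' T hT)) z
    have hcomm : Commute a P := by
      refine Commute.list_prod_right _ _ ?_
      intro S hS
      rw [List.mem_map] at hS
      obtain ⟨T, hT, rfl⟩ := hS
      exact (Commute.one_right a).sub_right (hp.1 T hT)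
    have hswap : a (P x) = P (a x) := by
      calc a (P x) = (a * P) x := rfl
        _ = (P * a) x := by rw [hcomm.eq]
        _ = P (a x) := rfl
    have h1 : ‖a (P x)‖ ≤ ‖a x‖ := by rw [hswap]; exact hcontr _
    have h1' : ‖a (P x)‖ ^ 2 ≤ ‖a x‖ ^ 2 := by
      have := norm_nonneg (a (P x)); nlinarith [norm_nonneg (a x)]
    have pyth := pythag_proj ha (P x)
    rw [List.map_cons, List.prod_cons, List.map_cons, List.sum_cons]
    have happ : ((1 - a) * P) x = P x - a (P x) := by
      simp [ContinuousLinearMap.mul_apply, ContinuousLinearMap.sub_apply]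
    rw [happ]
    linarith [pyth, ih', h1']

lemma sum_split {α : Type*} (l : List α) (p : α → Bool) (f : α → ℝ) :
    ((l.filter p).map f).sum + ((l.filter fun x => !p x).map f).sum = (l.map f).sum := by
  induction l with
  | nil => simp
  | cons a l ih =>
    cases hp : p a with
    | true =>
      rw [List.filter_cons_of_pos (by simp [hp]), List.filter_cons_of_neg (by simp [hp]),
        List.map_cons, List.map_cons]
      rw [List.sum_cons, List.sum_cons, add_assoc, ih]
    | false =>
      rw [List.filter_cons_of_neg (by simp [hp]), List.filter_cons_of_pos (by simp [hp]),
        List.map_cons, List.map_cons]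
      rw [List.sum_cons, List.sum_cons, ← add_assoc,
        add_comm (((l.filter p).map f).sum) (f a), add_assoc, ih]

end DLConverseAux

open DLConverseAux

/-- **Converse of the detectability lemma in 1D.** -/
theorem detectability_lemma_converse
    {E : Type*} [NormedAddCommGroup E] [InnerProductSpace ℂ E] [FiniteDimensional ℂ E]
    {n : ℕ} (h : Fin n → (E →L[ℂ] E))
    (hproj : ∀ i, IsSelfAdjoint (h i) ∧ (h i).comp (h i) = h i)
    (hcomm : ∀ i j : Fin n, (i.val + 2 ≤ j.val ∨ j.val + 2 ≤ i.val) → Commute (h i) (h j))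
    (DL : E →L[ℂ] E)
    (hDL : DL = ((((List.finRange n).filter fun i => i.val % 2 = 0).map
          fun i => (1 : E →L[ℂ] E) - h i).prod) *
        ((((List.finRange n).filter fun i => i.val % 2 = 1).map
          fun i => (1 : E →L[ℂ] E) - h i).prod))
    (ψ : E) (hψ : ‖ψ‖ = 1) (μ : ℂ) (heig : (∑ i, h i) ψ = μ • ψ)
    (ε' : ℝ) (hε : ε' = (⟪ψ, (∑ i, h i) ψ⟫_ℂ).re) :
    1 - 4 * ε' ≤ ‖DL ψ‖ ^ 2 := by
  have hproj' : ∀ i, IsProj (h i) := fun i => ⟨(hproj i).1, (hproj i).2⟩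
  set Le : List (Fin n) := (List.finRange n).filter (fun i => i.val % 2 = 0) with hLe
  set Lo : List (Fin n) := (List.finRange n).filter (fun i => i.val % 2 = 1) with hLo
  set P : E →L[ℂ] E := (Le.map fun i => (1 : E →L[ℂ] E) - h i).prod with hPd
  set Q : E →L[ℂ] E := (Lo.map fun i => (1 : E →L[ℂ] E) - h i).prod with hQd
  -- pairwise commutation within layers
  have hpw : ∀ (L : List (Fin n)), L = Le ∨ L = Lo →
      L.Pairwise fun i j : Fin n => Commute (h i) (h j) := by
    intro L hL
    have h0 : (List.finRange n).Pairwise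
        (fun i j : Fin n => i.val % 2 = j.val % 2 → Commute (h i) (h j)) := by
      refine (List.pairwise_lt_finRange n).imp ?_
      intro a b hab hpar
      refine hcomm a b (Or.inl ?_)
      have : a.val < b.val := hab
      omega
    rcases hL with rfl | rfl
    · refine (h0.filter _).imp_of_mem ?_
      intro a b hma hmb hr
      have pa : a.val % 2 = 0 := by simpa using (List.mem_filter.mp hma).2
      have pb : b.val % 2 = 0 := by simpa using (List.mem_filter.mp hmb).2
      exact hr (pa.trans pb.symm)
    · refine (h0.filter _).imp_of_mem ?_
      intro a b hma hmb hr
      have pa : a.val % 2 = 1 := by simpa using (List.mem_filter.mp hma).2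
      have pb : b.val % 2 = 1 := by simpa using (List.mem_filter.mp hmb).2
      exact hr (pa.trans pb.symm)
  -- apply lemma B to both layers
  have keyLayer : ∀ (L : List (Fin n)), L = Le ∨ L = Lo →
      ‖ψ‖ ^ 2 ≤ ‖((L.map fun i => (1 : E →L[ℂ] E) - h i).prod) ψ‖ ^ 2
        + (L.map fun i => ‖h i ψ‖ ^ 2).sum := by
    intro L hL
    have hm : ∀ T ∈ L.map h, IsProj T := by
      intro T hT; rw [List.mem_map] at hT; obtain ⟨i, _, rfl⟩ := hT; exact hproj' i
    have hpair : (L.map h).Pairwise Commute :=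
      List.Pairwise.map _ (fun a b hab => hab) (hpw L hL)
    have := lemB (L.map h) hm hpair ψ
    rw [List.map_map, List.map_map] at this
    exact this
  have projLayer : ∀ (L : List (Fin n)), L = Le ∨ L = Lo →
      IsProj ((L.map fun i => (1 : E →L[ℂ] E) - h i).prod) := by
    intro L hL
    refine isProj_prod _ ?_ ?_
    · intro T hT; rw [List.mem_map] at hT; obtain ⟨i, _, rfl⟩ := hT
      exact isProj_one_sub (hproj' i)
    · refine List.Pairwise.map _ ?_ (hpw L hL)
      intro a b hab
      exact ((Commute.one_right _).sub_right (((Commute.one_left (h b)).sub_left hab)))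
  have projP : IsProj P := projLayer Le (Or.inl rfl)
  have projQ : IsProj Q := projLayer Lo (Or.inr rfl)
  set εe : ℝ := (Le.map fun i => ‖h i ψ‖ ^ 2).sum with hεe
  set εo : ℝ := (Lo.map fun i => ‖h i ψ‖ ^ 2).sum with hεo
  have hεe0 : 0 ≤ εe := by
    refine List.sum_nonneg ?_
    intro x hx; rw [List.mem_map] at hx; obtain ⟨i, _, rfl⟩ := hx; positivity
  have hεo0 : 0 ≤ εo := by
    refine List.sum_nonneg ?_
    intro x hx; rw [List.mem_map] at hx; obtain ⟨i, _, rfl⟩ := hx; positivity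
  have hψ2 : ‖ψ‖ ^ 2 = 1 := by rw [hψ]; norm_num
  have keyP : 1 ≤ ‖P ψ‖ ^ 2 + εe := by
    have := keyLayer Le (Or.inl rfl); rw [hψ2] at this; exact this
  have keyQ : 1 ≤ ‖Q ψ‖ ^ 2 + εo := by
    have := keyLayer Lo (Or.inr rfl); rw [hψ2] at this; exact this
  -- ε' = εe + εo
  have hsum : ε' = εe + εo := by
    rw [hε, ContinuousLinearMap.sum_apply, inner_sum, Complex.re_sum]
    have : ∑ i, (⟪ψ, h i ψ⟫_ℂ).re = ∑ i, ‖h i ψ‖ ^ 2 :=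
      Finset.sum_congr rfl fun i _ => inner_self_proj (hproj' i) ψ
    rw [this, Fin.sum_univ_def]
    rw [← sum_split (List.finRange n) (fun i => decide (i.val % 2 = 0))
      (fun i => ‖h i ψ‖ ^ 2)]
    have hfeq : (List.finRange n).filter (fun i : Fin n => !decide (i.val % 2 = 0))
        = Lo := by
      rw [hLo]
      refine List.filter_congr ?_
      intro x _
      rcases Nat.mod_two_eq_zero_or_one x.val with h2 | h2 <;> simp [h2]
    rw [hfeq]
  -- Pythagoras and triangle bounds
  have pythP : ‖Q ψ - P (Q ψ)‖ ^ 2 = ‖Q ψ‖ ^ 2 - ‖P (Q ψ)‖ ^ 2 := pythag_proj projP (Q ψ)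
  have pythPψ : ‖ψ - P ψ‖ ^ 2 = ‖ψ‖ ^ 2 - ‖P ψ‖ ^ 2 := pythag_proj projP ψ
  have pythQψ : ‖ψ - Q ψ‖ ^ 2 = ‖ψ‖ ^ 2 - ‖Q ψ‖ ^ 2 := pythag_proj projQ ψ
  have ha2 : ‖ψ - P ψ‖ ^ 2 ≤ εe := by rw [pythPψ, hψ2]; linarith
  have hb2 : ‖ψ - Q ψ‖ ^ 2 ≤ εo := by rw [pythQψ, hψ2]; linarith
  have htri : ‖Q ψ - P (Q ψ)‖ ≤ ‖ψ - P ψ‖ + ‖ψ - Q ψ‖ := by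
    have hc := contraction_proj (isProj_one_sub projP) (ψ - Q ψ)
    have e0 : ∀ y : E, (1 - P) y = y - P y := by
      intro y; simp [ContinuousLinearMap.sub_apply]
    have e2 : Q ψ - P (Q ψ) = (ψ - P ψ) - (1 - P) (ψ - Q ψ) := by
      rw [e0, map_sub]; abel
    calc ‖Q ψ - P (Q ψ)‖ = ‖(ψ - P ψ) - (1 - P) (ψ - Q ψ)‖ := by rw [e2]
      _ ≤ ‖ψ - P ψ‖ + ‖(1 - P) (ψ - Q ψ)‖ := norm_sub_le _ _
      _ ≤ ‖ψ - P ψ‖ + ‖ψ - Q ψ‖ := add_le_add le_rfl hc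
  have hc2 : ‖Q ψ - P (Q ψ)‖ ^ 2 ≤ 2 * εe + 2 * εo := by
    nlinarith [ha2, hb2, norm_nonneg (Q ψ - P (Q ψ)), norm_nonneg (ψ - P ψ),
      norm_nonneg (ψ - Q ψ), sq_nonneg (‖ψ - P ψ‖ - ‖ψ - Q ψ‖)]
  have hDLapp : DL ψ = P (Q ψ) := by rw [hDL]; rfl
  rw [hDLapp]
  rw [hsum]
  linarith [pythP, keyQ, hc2, hεe0, hεo0]
end
end

section
/- Let K be a positive semidefinite operator and T an invariant subspace of K on which all eigenvalues of K are ≥ 1, and suppose ‖K v⊥‖² ≤ Δ for every unit vector v⊥ orthogonal to T in a K-invariant complement. Let u = α v + √(1-α²) v⊥ with v ∈ T, v⊥ ⊥ T unit vectors in the respective K-invariant subspaces and α ≥ 1-δ > 0. Then |⟨K u/‖K u‖, K v/‖K v‖⟩|² ≥ 1 - Δ/(1-δ)². -/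
noncomputable section

open scoped InnerProductSpace

private lemma err_red_aux (A B Δ d : ℝ) (hd : 0 < 1 - d) (hA : (1 - d) ^ 2 ≤ A)
    (hB0 : 0 ≤ B) (hBΔ : B ≤ Δ) (hΔ0 : 0 ≤ Δ) :
    1 - Δ / (1 - d) ^ 2 ≤ A / (A + B) := by
  have hd2 : (0:ℝ) < (1 - d) ^ 2 := by positivity
  have hA0 : 0 < A := lt_of_lt_of_le hd2 hA
  have hAB : 0 < A + B := by linarith
  have hdd : 0 ≤ Δ / (1 - d) ^ 2 := div_nonneg hΔ0 hd2.le
  rw [le_div_iff₀ hAB]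
  have hq : Δ / (1 - d) ^ 2 * (1 - d) ^ 2 = Δ := div_mul_cancel₀ _ (ne_of_gt hd2)
  nlinarith [mul_le_mul_of_nonneg_left hA hdd, mul_nonneg hdd hB0]

set_option maxHeartbeats 1000000 in
/-- **Error reduction core computation.** If `K` is positive semidefinite, preserves `T` and
`Tᗮ`, acts with eigenvalues `≥ 1` on `T` and with `‖K v⊥‖² ≤ Δ` on unit vectors of `Tᗮ`,
then for `u = α v + √(1-α²) v⊥` with `v ∈ T`, `v⊥ ∈ Tᗮ` unit vectors and `α ≥ 1-δ > 0`,
the normalized images satisfy `|⟨Ku/‖Ku‖, Kv/‖Kv‖⟩|² ≥ 1 - Δ/(1-δ)²`. -/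
theorem error_reduction_overlap
    {E : Type*} [NormedAddCommGroup E] [InnerProductSpace ℂ E] [FiniteDimensional ℂ E]
    (K : E →L[ℂ] E) (hK : K.IsPositive)
    (T : Submodule ℂ E)
    (hTinv : ∀ x ∈ T, K x ∈ T) (hTperpinv : ∀ x ∈ Tᗮ, K x ∈ Tᗮ)
    (hKT : ∀ x ∈ T, ‖x‖ ^ 2 ≤ (⟪x, K x⟫_ℂ).re)
    (Δ : ℝ) (hΔ : ∀ x ∈ Tᗮ, ‖x‖ = 1 → ‖K x‖ ^ 2 ≤ Δ)
    (δ α : ℝ) (hδ : 0 < 1 - δ) (hα : 1 - δ ≤ α) (hα1 : α ≤ 1)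
    (v w u : E) (hv : v ∈ T) (hvnorm : ‖v‖ = 1)
    (hw : w ∈ Tᗮ) (hwnorm : ‖w‖ = 1)
    (hu : u = (α : ℂ) • v + ((Real.sqrt (1 - α ^ 2) : ℝ) : ℂ) • w) :
    1 - Δ / (1 - δ) ^ 2 ≤
      ‖⟪((‖K u‖⁻¹ : ℝ) : ℂ) • K u, ((‖K v‖⁻¹ : ℝ) : ℂ) • K v⟫_ℂ‖ ^ 2 := by
  have hα0 : 0 < α := lt_of_lt_of_le hδ hα
  set β := Real.sqrt (1 - α ^ 2) with hβdef
  have hβ0 : 0 ≤ β := Real.sqrt_nonneg _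
  have hβ2 : β ^ 2 = 1 - α ^ 2 := Real.sq_sqrt (by nlinarith)
  set a := K v with ha
  set b := K w with hb
  have haT : a ∈ T := hTinv v hv
  have hbT : b ∈ Tᗮ := hTperpinv w hw
  have hab : ⟪a, b⟫_ℂ = 0 := hbT a haT
  have hba : ⟪b, a⟫_ℂ = 0 := by
    rw [← inner_conj_symm, hab, map_zero]
  have ha1 : 1 ≤ ‖a‖ := by
    have h1 : (1:ℝ) ≤ (⟪v, K v⟫_ℂ).re := by
      have := hKT v hv; rwa [hvnorm, one_pow] at this
    have h2 : (⟪v, K v⟫_ℂ).re ≤ ‖⟪v, K v⟫_ℂ‖ := Complex.re_le_norm _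
    have h3 : ‖⟪v, K v⟫_ℂ‖ ≤ ‖v‖ * ‖K v‖ := norm_inner_le_norm _ _
    rw [hvnorm, one_mul] at h3
    linarith
  have ha0 : 0 < ‖a‖ := lt_of_lt_of_le one_pos ha1
  have hb2 : ‖b‖ ^ 2 ≤ Δ := hΔ w hw hwnorm
  have hΔ0 : 0 ≤ Δ := le_trans (sq_nonneg _) hb2
  have hKu : K u = (α : ℂ) • a + (β : ℂ) • b := by
    rw [hu, map_add, map_smul, map_smul]
  have h0 : ⟪(α : ℂ) • a, (β : ℂ) • b⟫_ℂ = 0 := by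
    rw [inner_smul_left, inner_smul_right, hab]; ring
  have hNu : ‖K u‖ ^ 2 = α ^ 2 * ‖a‖ ^ 2 + β ^ 2 * ‖b‖ ^ 2 := by
    rw [hKu, pow_two, norm_add_sq_eq_norm_sq_add_norm_sq_of_inner_eq_zero _ _ h0]
    simp only [norm_smul, Complex.norm_real, Real.norm_eq_abs,
      abs_of_nonneg hα0.le, abs_of_nonneg hβ0]
    ring
  have hNu0 : 0 < ‖K u‖ := by
    have h4 : 0 < ‖K u‖ ^ 2 := by
      rw [hNu]
      have : 0 < α ^ 2 * ‖a‖ ^ 2 := by positivity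
      nlinarith [mul_nonneg (sq_nonneg β) (sq_nonneg ‖b‖)]
    nlinarith [norm_nonneg (K u)]
  have hinner : ⟪K u, a⟫_ℂ = (α : ℂ) * ((‖a‖ : ℂ)) ^ 2 := by
    rw [hKu, inner_add_left, inner_smul_left, inner_smul_left, hba,
      @inner_self_eq_norm_sq_to_K ℂ]
    simp [Complex.conj_ofReal]
  have hval : ‖⟪((‖K u‖⁻¹ : ℝ) : ℂ) • K u, ((‖K v‖⁻¹ : ℝ) : ℂ) • K v⟫_ℂ‖
      = ‖K u‖⁻¹ * ‖a‖⁻¹ * (α * ‖a‖ ^ 2) := by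
    rw [inner_smul_left, inner_smul_right, ← ha, hinner]
    simp [Complex.conj_ofReal, abs_of_nonneg hα0.le, abs_of_nonneg ha0.le,
      abs_of_nonneg hNu0.le, mul_pow]
    ring
  rw [hval]
  have hAlb : (1 - δ) ^ 2 ≤ α ^ 2 * ‖a‖ ^ 2 := by
    have h1 : (1 - δ) ^ 2 ≤ α ^ 2 := by nlinarith
    have h2 : (1:ℝ) ≤ ‖a‖ ^ 2 := by nlinarith
    nlinarith [mul_le_mul_of_nonneg_left h2 (sq_nonneg α)]
  have hβle : β ^ 2 ≤ 1 := by rw [hβ2]; linarith [sq_nonneg α]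
  have hBub : β ^ 2 * ‖b‖ ^ 2 ≤ Δ := by
    calc β ^ 2 * ‖b‖ ^ 2 ≤ 1 * Δ := mul_le_mul hβle hb2 (sq_nonneg _) zero_le_one
      _ = Δ := one_mul Δ
  have hB0 : 0 ≤ β ^ 2 * ‖b‖ ^ 2 := by positivity
  have hkey : 1 - Δ / (1 - δ) ^ 2 ≤ α ^ 2 * ‖a‖ ^ 2 / ‖K u‖ ^ 2 := by
    rw [hNu]
    exact err_red_aux _ _ _ _ hδ hAlb hB0 hBub hΔ0
  calc 1 - Δ / (1 - δ) ^ 2 ≤ α ^ 2 * ‖a‖ ^ 2 / ‖K u‖ ^ 2 := hkey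
    _ = (‖K u‖⁻¹ * ‖a‖⁻¹ * (α * ‖a‖ ^ 2)) ^ 2 := by
        field_simp
end
end
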